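/- For positive integers a, s, n with the entries defined, the n × n matrix with (i,j) entry the binomial coefficient C(a, s + i − j) has determinant ∏_{i=1}^{n} ((a+i−1)!·(i−1)!) / ((s+i−1)!·(a−s+i−1)!). -/
import Mathlib

open Finset Polynomial

lemma prod_cast_descFactorial (m j : ℕ) :
    ∏ l ∈ Finset.range j, ((m : ℚ) - l) = m.descFactorial j := by
  induction j with
  | zero => simp
  | succ j ih =>
    rw [Finset.prod_range_succ, ih, Nat.descFactorial_succ]
    rcases le_or_gt j m with h | h
    · push_cast [h]; ring
    · rw [Nat.descFactorial_of_lt h]; simp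



/-- The binomial determinant identity: for positive integers `a, s, n` with `s ≤ a`,
the `n × n` matrix with `(i,j)` entry `C(a, s + i − j)` (interpreted as `0` when
`s + i − j < 0`; automatically `0` when `s + i − j > a`) has determinant
`∏_{i=1}^{n} ((a+i−1)!·(i−1)!) / ((s+i−1)!·(a−s+i−1)!)`. -/
theorem det_binomial_matrix
    (a s n : ℕ) (ha : 0 < a) (hs : 0 < s) (hn : 0 < n) (hsa : s ≤ a) :
    Matrix.det (Matrix.of fun i j : Fin n =>
      if (j : ℕ) ≤ s + (i : ℕ)
        then ((a.choose (s + (i : ℕ) - (j : ℕ)) : ℚ))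
        else 0) =
    ∏ i ∈ Finset.range n,
      (((a + i).factorial : ℚ) * (i.factorial : ℚ)) /
        (((s + i).factorial : ℚ) * ((a - s + i).factorial : ℚ)) := by
  set b : ℕ := a - s + (n - 1) with hb
  have hbn : ∀ i : Fin n, (i : ℕ) ≤ b := fun i => by have := i.2; omega
  -- polynomials
  set P : Fin n → ℚ[X] := fun j =>
    (∏ l ∈ Finset.range (j : ℕ), (X + C ((s : ℚ) - l))) *
      (∏ l ∈ Finset.range (n - 1 - (j : ℕ)), (C ((b : ℚ) - l) - X)) with hP
  have hdeg : ∀ j : Fin n, (P j).natDegree < n := by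
    intro j
    have h1 : (∏ l ∈ Finset.range (j : ℕ), (X + C ((s : ℚ) - l))).natDegree ≤ (j : ℕ) := by
      refine le_trans (natDegree_prod_le _ _) ?_
      have : ∀ l ∈ Finset.range (j : ℕ), (X + C ((s : ℚ) - l)).natDegree = 1 :=
        fun l _ => natDegree_X_add_C _
      rw [Finset.sum_congr rfl this, Finset.sum_const, smul_eq_mul, mul_one,
        Finset.card_range]
    have h2 : (∏ l ∈ Finset.range (n - 1 - (j : ℕ)), (C ((b : ℚ) - l) - X)).natDegree
        ≤ n - 1 - (j : ℕ) := by
      refine le_trans (natDegree_prod_le _ _) ?_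
      have : ∀ l ∈ Finset.range (n - 1 - (j : ℕ)), (C ((b : ℚ) - l) - X).natDegree = 1 := by
        intro l _
        have h : (C ((b : ℚ) - l) - X) = -(X - C ((b : ℚ) - l)) := by ring
        rw [h, natDegree_neg, natDegree_X_sub_C]
      rw [Finset.sum_congr rfl this, Finset.sum_const, smul_eq_mul, mul_one,
        Finset.card_range]
    have hle : (P j).natDegree ≤ (j : ℕ) + (n - 1 - (j : ℕ)) := by
      rw [hP]
      exact le_trans natDegree_mul_le (add_le_add h1 h2)
    have hj := j.2
    omega
  -- evaluation at (i : ℚ)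
  have hevalx : ∀ i j : Fin n, (P j).eval (i : ℚ) =
      ((s + (i : ℕ)).descFactorial (j : ℕ) : ℚ) *
        ((b - (i : ℕ)).descFactorial (n - 1 - (j : ℕ)) : ℚ) := by
    intro i j
    rw [hP]
    simp only [eval_mul, eval_prod, eval_add, eval_sub, eval_X, eval_C]
    congr 1
    · rw [← prod_cast_descFactorial]
      refine Finset.prod_congr rfl fun l _ => ?_
      push_cast; ring
    · rw [← prod_cast_descFactorial]
      refine Finset.prod_congr rfl fun l _ => ?_
      rw [Nat.cast_sub (hbn i)]
      ring
  -- evaluation at (i : ℚ) - s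
  have hevaly : ∀ i j : Fin n, (i : ℕ) < (j : ℕ) → (P j).eval ((i : ℚ) - s) = 0 := by
    intro i j hij
    rw [hP]
    simp only [eval_mul, eval_prod, eval_add, eval_sub, eval_X, eval_C]
    apply mul_eq_zero_of_left
    refine Finset.prod_eq_zero (Finset.mem_range.2 hij) ?_
    push_cast; ring
  have hevaldiag : ∀ i : Fin n, (P i).eval ((i : ℚ) - s) =
      ((i : ℕ).factorial : ℚ) * ((a + (n - 1 - (i : ℕ))).descFactorial (n - 1 - (i : ℕ)) : ℚ) := by
    intro i
    rw [hP]
    simp only [eval_mul, eval_prod, eval_add, eval_sub, eval_X, eval_C]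
    congr 1
    · rw [← Nat.descFactorial_self, ← prod_cast_descFactorial]
      refine Finset.prod_congr rfl fun l _ => ?_
      push_cast; ring
    · rw [← prod_cast_descFactorial]
      refine Finset.prod_congr rfl fun l _ => ?_
      have hi : (i : ℕ) ≤ n - 1 := by have := i.2; omega
      have : ((b : ℚ) - l - ((i : ℚ) - s)) = ((a + (n - 1 - (i : ℕ)) : ℕ) : ℚ) - l := by
        rw [hb]
        push_cast [Nat.cast_sub hsa, Nat.cast_sub hi]
        ring
      rw [this]
  -- the key entrywise identity
  have key : ∀ i j : Fin n,
      (((s + (i : ℕ)).factorial : ℚ) * ((b - (i : ℕ)).factorial : ℚ)) *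
        (if (j : ℕ) ≤ s + (i : ℕ) then ((a.choose (s + (i : ℕ) - (j : ℕ)) : ℚ)) else 0) =
      (a.factorial : ℚ) * (P j).eval (i : ℚ) := by
    intro i j
    have hi := i.2
    have hj := j.2
    rw [hevalx]
    by_cases h1 : (j : ℕ) ≤ s + (i : ℕ)
    · rw [if_pos h1]
      by_cases h2 : s + (i : ℕ) - (j : ℕ) ≤ a
      · have e1 : (s + (i : ℕ) - (j : ℕ)).factorial * ((s + (i : ℕ)).descFactorial (j : ℕ))
            = (s + (i : ℕ)).factorial := Nat.factorial_mul_descFactorial h1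
        have hm2 : n - 1 - (j : ℕ) ≤ b - (i : ℕ) := by omega
        have e2 : (b - (i : ℕ) - (n - 1 - (j : ℕ))).factorial *
            ((b - (i : ℕ)).descFactorial (n - 1 - (j : ℕ))) = (b - (i : ℕ)).factorial :=
          Nat.factorial_mul_descFactorial hm2
        have e3 : b - (i : ℕ) - (n - 1 - (j : ℕ)) = a - (s + (i : ℕ) - (j : ℕ)) := by omega
        have e4 : a.choose (s + (i : ℕ) - (j : ℕ)) * (s + (i : ℕ) - (j : ℕ)).factorial *
            (a - (s + (i : ℕ) - (j : ℕ))).factorial = a.factorial :=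
          Nat.choose_mul_factorial_mul_factorial h2
        have hnat : (s + (i : ℕ)).factorial * (b - (i : ℕ)).factorial *
            a.choose (s + (i : ℕ) - (j : ℕ)) =
            a.factorial * ((s + (i : ℕ)).descFactorial (j : ℕ) *
              ((b - (i : ℕ)).descFactorial (n - 1 - (j : ℕ)))) := by
          rw [← e1, ← e2, e3, ← e4]; ring
        calc ((s + (i : ℕ)).factorial : ℚ) * ((b - (i : ℕ)).factorial : ℚ) *
              (a.choose (s + (i : ℕ) - (j : ℕ)) : ℚ)
            = (((s + (i : ℕ)).factorial * (b - (i : ℕ)).factorial *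
                a.choose (s + (i : ℕ) - (j : ℕ)) : ℕ) : ℚ) := by push_cast; ring
          _ = _ := by rw [hnat]; push_cast; ring
      · have hz1 : a.choose (s + (i : ℕ) - (j : ℕ)) = 0 :=
          Nat.choose_eq_zero_of_lt (by omega)
        have hz2 : (b - (i : ℕ)).descFactorial (n - 1 - (j : ℕ)) = 0 :=
          Nat.descFactorial_of_lt (by omega)
        rw [hz1, hz2]; simp
    · rw [if_neg h1]
      have hz1 : (s + (i : ℕ)).descFactorial (j : ℕ) = 0 :=
        Nat.descFactorial_of_lt (by omega)
      rw [hz1]; simp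
  -- matrix manipulations
  set Mat : Matrix (Fin n) (Fin n) ℚ := Matrix.of (fun i j : Fin n =>
    if (j : ℕ) ≤ s + (i : ℕ) then ((a.choose (s + (i : ℕ) - (j : ℕ)) : ℚ)) else 0) with hMat
  set v : Fin n → ℚ := fun i => ((s + (i : ℕ)).factorial : ℚ) * ((b - (i : ℕ)).factorial : ℚ)
    with hv
  have hvne : (∏ i, v i) ≠ 0 := by
    refine Finset.prod_ne_zero_iff.2 fun i _ => ?_
    exact mul_ne_zero (by exact_mod_cast (Nat.factorial_pos _).ne')
      (by exact_mod_cast (Nat.factorial_pos _).ne')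
  have hfactor : ∀ x : Fin n → ℚ,
      Matrix.det (Matrix.of fun i j : Fin n => (P j).eval (x i)) =
        (Matrix.vandermonde x).det *
          (Matrix.of fun k j : Fin n => (P j).coeff (k : ℕ)).det := by
    intro x
    rw [← Matrix.det_mul]
    congr 1
    ext i j
    rw [Matrix.mul_apply]
    simp only [Matrix.of_apply, Matrix.vandermonde_apply]
    rw [eval_eq_sum_range' (hdeg j) (x i),
      ← Fin.sum_univ_eq_sum_range (fun k => (P j).coeff k * x i ^ k) n]
    exact Finset.sum_congr rfl fun k _ => (mul_comm _ _)
  have hvdm : (Matrix.vandermonde fun i : Fin n => ((i : ℕ) : ℚ)).det =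
      (Matrix.vandermonde fun i : Fin n => ((i : ℕ) : ℚ) - s).det := by
    rw [Matrix.det_vandermonde, Matrix.det_vandermonde]
    exact Finset.prod_congr rfl fun i _ => Finset.prod_congr rfl fun j _ => by ring
  have htri : Matrix.det (Matrix.of fun i j : Fin n => (P j).eval ((i : ℕ) - s : ℚ)) =
      ∏ i : Fin n, (P i).eval ((i : ℕ) - s : ℚ) := by
    apply Matrix.det_of_lowerTriangular
    intro i j hij
    exact hevaly i j hij
  have main : (∏ i, v i) * Mat.det =
      ((a.factorial : ℚ)) ^ n * ∏ i : Fin n, (((i : ℕ).factorial : ℚ) *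
        ((a + (n - 1 - (i : ℕ))).descFactorial (n - 1 - (i : ℕ)) : ℚ)) := by
    rw [← Matrix.det_mul_column v Mat]
    have h1 : (Matrix.of fun i j : Fin n => v i * Mat i j) =
        (Matrix.of fun i j : Fin n => (a.factorial : ℚ) *
          (Matrix.of fun i' j' : Fin n => (P j').eval ((i' : ℕ) : ℚ)) i j) := by
      ext i j
      simp only [Matrix.of_apply]
      exact key i j
    rw [h1, Matrix.det_mul_row (fun _ => (a.factorial : ℚ)), Finset.prod_const,
      Finset.card_univ, Fintype.card_fin]
    congr 1
    rw [hfactor, hvdm, ← hfactor, htri]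
    exact Finset.prod_congr rfl fun i _ => hevaldiag i
  -- final algebra
  refine mul_left_cancel₀ hvne ?_
  rw [main]
  have hprodv : (∏ i, v i) = (∏ i ∈ Finset.range n, ((s + i).factorial : ℚ)) *
      ∏ i ∈ Finset.range n, ((a - s + i).factorial : ℚ) := by
    rw [hv, Fin.prod_univ_eq_prod_range
        (fun i => ((s + i).factorial : ℚ) * ((b - i).factorial : ℚ)) n,
      Finset.prod_mul_distrib,
      ← Finset.prod_range_reflect (fun i => ((a - s + i).factorial : ℚ)) n]
    congr 1
    refine Finset.prod_congr rfl fun i hi => ?_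
    have hbi : b - i = a - s + (n - 1 - i) := by
      have := Finset.mem_range.1 hi; omega
    rw [hbi]
  have hlhs : ((a.factorial : ℚ)) ^ n * ∏ i : Fin n, (((i : ℕ).factorial : ℚ) *
      ((a + (n - 1 - (i : ℕ))).descFactorial (n - 1 - (i : ℕ)) : ℚ)) =
      (∏ i ∈ Finset.range n, ((a + i).factorial : ℚ)) *
        ∏ i ∈ Finset.range n, ((i.factorial : ℚ)) := by
    rw [Fin.prod_univ_eq_prod_range (fun i => ((i.factorial : ℚ) *
      ((a + (n - 1 - i)).descFactorial (n - 1 - i) : ℚ))) n]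
    have hpow : ((a.factorial : ℚ)) ^ n = ∏ _i ∈ Finset.range n, (a.factorial : ℚ) := by
      rw [Finset.prod_const, Finset.card_range]
    rw [hpow, ← Finset.prod_mul_distrib]
    have hterm : ∀ i ∈ Finset.range n, (a.factorial : ℚ) * ((i.factorial : ℚ) *
        ((a + (n - 1 - i)).descFactorial (n - 1 - i) : ℚ)) =
        ((a + (n - 1 - i)).factorial : ℚ) * (i.factorial : ℚ) := by
      intro i _
      have h := Nat.factorial_mul_descFactorial (Nat.le_add_left (n - 1 - i) a)
      rw [Nat.add_sub_cancel] at h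
      calc (a.factorial : ℚ) * ((i.factorial : ℚ) *
            ((a + (n - 1 - i)).descFactorial (n - 1 - i) : ℚ))
          = ((a.factorial * ((a + (n - 1 - i)).descFactorial (n - 1 - i)) : ℕ) : ℚ) *
            (i.factorial : ℚ) := by push_cast; ring
        _ = _ := by rw [h]
    rw [Finset.prod_congr rfl hterm, Finset.prod_mul_distrib,
      Finset.prod_range_reflect (fun i => ((a + i).factorial : ℚ)) n]
  rw [hlhs, hprodv, ← Finset.prod_mul_distrib, ← Finset.prod_mul_distrib,
    ← Finset.prod_mul_distrib]
  refine Finset.prod_congr rfl fun i _ => ?_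
  have h1 : ((s + i).factorial : ℚ) ≠ 0 := by exact_mod_cast (Nat.factorial_pos _).ne'
  have h2 : ((a - s + i).factorial : ℚ) ≠ 0 := by exact_mod_cast (Nat.factorial_pos _).ne'
  field_simp
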